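/- arXiv:1006.2694 — 2 statements merged into one kernel-verified Lean document; each statement's English description precedes it below -/
import Mathlib

section
/- Let D be a finite set, α > 0, C > 0, and for each i ∈ D let μ_i be a Borel measure on ℝ^d \ {0} satisfying μ_i({x : ‖x‖ ≥ s}) ≤ C s^{-α} for all s > 0. Let (Z_k)_{k ≤ 0} be D-valued random variables and (Π_{k+1})_{k ≤ 0} random d×d matrices, all on a common probability space, with Σ_{k=-∞}^0 E(‖Π_{k+1}‖^α) < ∞. Then for every Borel set K ⊆ ℝ^d with ε_K := inf{‖x‖ : x ∈ K} > 0, Σ_{k=-∞}^0 E(μ_{Z_k}({x : Π_{k+1} x ∈ K})) ≤ |D| · C · ε_K^{-α} · Σ_{k=-∞}^0 E(‖Π_{k+1}‖^α) < ∞; in particular, the measure μ_X(·) := Σ_{k=-∞}^0 E(μ_{Z_k}({x : Π_{k+1} x ∈ ·})) is finite on every Borel set bounded away from 0. -/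
open MeasureTheory ProbabilityTheory Filter Topology ENNReal

noncomputable section

/-- `ℝ^d` with the sup norm (the Pi norm on `Fin d → ℝ` is the sup norm). -/
abbrev Vec (d : ℕ) := Fin d → ℝ

/-- `d × d` real matrices. -/
abbrev Mat (d : ℕ) := Matrix (Fin d) (Fin d) ℝ

/-- The operator norm of a `d × d` matrix, induced by the sup norm on `ℝ^d`. -/
noncomputable def opNorm {d : ℕ} (M : Mat d) : ℝ :=
  ‖LinearMap.toContinuousLinearMap M.mulVecLin‖

/-- `a` is regularly varying of index `ρ`: `a t = t ^ ρ * L t` with `L` slowly varying. -/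
def RegVaryFun (a : ℝ → ℝ) (ρ : ℝ) : Prop :=
  ∃ L : ℝ → ℝ, Measurable L ∧ (∀ t > 0, 0 < L t) ∧
    (∀ lam > 0, Filter.Tendsto (fun t => L (lam * t) / L t) Filter.atTop (nhds 1)) ∧
    (∀ t > 0, a t = t ^ ρ * L t)

/-- A random vector `X` is regularly varying with index `α > 0`, normalizing function `a`
and associated measure of regular variation `ν`: `ν` is finite on Borel sets bounded away
from `0` and `n P(a_n⁻¹ X ∈ A) → ν A` for every Borel `ν`-continuity set `A` bounded away
from `0`. -/
def IsRegVar {Ω : Type*} [MeasurableSpace Ω] (P : Measure Ω) {d : ℕ}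
    (X : Ω → Vec d) (α : ℝ) (a : ℝ → ℝ) (ν : Measure (Vec d)) : Prop :=
  0 < α ∧ RegVaryFun a (1 / α) ∧
  (∀ A : Set (Vec d), MeasurableSet A → 0 ∉ closure A → ν A < ⊤) ∧
  ∀ A : Set (Vec d), MeasurableSet A → 0 ∉ closure A → ν (frontier A) = 0 →
    Filter.Tendsto (fun n : ℕ => (n : ℝ) * (P {ω | (a n)⁻¹ • X ω ∈ A}).toReal)
      Filter.atTop (nhds (ν A).toReal)

instance {d : ℕ} : MeasurableSpace (Mat d) :=
  (inferInstance : MeasurableSpace (Fin d → Fin d → ℝ))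

/-- If each `μᵢ` satisfies `μᵢ{‖x‖ ≥ s} ≤ C s^{-α}` and
`Σ_k E‖Π_k‖^α < ∞`, then for every Borel `K` with `ε_K := inf{‖x‖ : x ∈ K} > 0`,
`Σ_k E(μ_{Z_k}{x : Π_k x ∈ K}) ≤ |D| C ε_K^{-α} Σ_k E‖Π_k‖^α < ∞`. -/
theorem stmt8 {Ω : Type*} [MeasurableSpace Ω] (P : Measure Ω) [IsProbabilityMeasure P]
    {d : ℕ} (hd : 1 ≤ d)
    {D : Type*} [Fintype D] [MeasurableSpace D] [MeasurableSingletonClass D]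
    (α C : ℝ) (hα : 0 < α) (hC : 0 < C)
    (μ : D → Measure (Vec d))
    (hμ : ∀ i : D, ∀ s : ℝ, 0 < s → μ i {x : Vec d | s ≤ ‖x‖} ≤ ENNReal.ofReal (C * s ^ (-α)))
    (Z : ℕ → Ω → D) (Pi : ℕ → Ω → Mat d)
    (hZ : ∀ k, Measurable (Z k)) (hPi : ∀ k, Measurable (Pi k))
    (hsum : ∑' k : ℕ, ∫⁻ ω, ENNReal.ofReal (opNorm (Pi k ω) ^ α) ∂P < ⊤)
    (K : Set (Vec d)) (hK : MeasurableSet K)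
    (hεK : 0 < sInf (norm '' K)) :
    (∑' k : ℕ, ∫⁻ ω, μ (Z k ω) {x : Vec d | (Pi k ω).mulVec x ∈ K} ∂P ≤
      (Fintype.card D : ℝ≥0∞) * ENNReal.ofReal (C * sInf (norm '' K) ^ (-α)) *
        ∑' k : ℕ, ∫⁻ ω, ENNReal.ofReal (opNorm (Pi k ω) ^ α) ∂P) ∧
    (Fintype.card D : ℝ≥0∞) * ENNReal.ofReal (C * sInf (norm '' K) ^ (-α)) *
        (∑' k : ℕ, ∫⁻ ω, ENNReal.ofReal (opNorm (Pi k ω) ^ α) ∂P) < ⊤ := by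
  set ε := sInf (norm '' K) with hε
  have hΩ : Nonempty Ω := by
    by_contra h
    rw [not_nonempty_iff] at h
    have : P Set.univ = 1 := measure_univ
    rw [Set.univ_eq_empty_iff.2 h, measure_empty] at this
    exact zero_ne_one this
  have hD : Nonempty D := ⟨Z 0 (Classical.arbitrary Ω)⟩
  have hcard : (1 : ℝ≥0∞) ≤ (Fintype.card D : ℝ≥0∞) := by
    exact_mod_cast Fintype.card_pos
  set c : ℝ≥0∞ := ENNReal.ofReal (C * ε ^ (-α)) with hc
  -- pointwise bound
  have key : ∀ k ω, μ (Z k ω) {x : Vec d | (Pi k ω).mulVec x ∈ K} ≤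
      c * ENNReal.ofReal (opNorm (Pi k ω) ^ α) := by
    intro k ω
    set M := Pi k ω
    set N := opNorm M with hN
    have hN0 : 0 ≤ N := norm_nonneg _
    have hbound : ∀ x : Vec d, M.mulVec x ∈ K → ε ≤ N * ‖x‖ := by
      intro x hx
      have h1 : ε ≤ ‖M.mulVec x‖ :=
        csInf_le ⟨0, by rintro r ⟨y, -, rfl⟩; exact norm_nonneg y⟩ ⟨_, hx, rfl⟩
      have h2 : ‖M.mulVec x‖ ≤ N * ‖x‖ := by
        have := (LinearMap.toContinuousLinearMap M.mulVecLin).le_opNorm x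
        simpa [hN, opNorm] using this
      linarith
    rcases eq_or_lt_of_le hN0 with hN0' | hNpos
    · -- N = 0 : the set is empty
      have : {x : Vec d | M.mulVec x ∈ K} = ∅ := by
        ext x
        simp only [Set.mem_setOf_eq, Set.mem_empty_iff_false, iff_false]
        intro hx
        have := hbound x hx
        rw [← hN0'] at this
        simp at this
        linarith
      simp [this]
    · -- N > 0
      have hsub : {x : Vec d | M.mulVec x ∈ K} ⊆ {x : Vec d | ε / N ≤ ‖x‖} := by
        intro x hx
        exact (div_le_iff₀' hNpos).2 (hbound x hx)
      have hs : 0 < ε / N := div_pos hεK hNpos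
      calc μ (Z k ω) {x : Vec d | M.mulVec x ∈ K}
          ≤ μ (Z k ω) {x : Vec d | ε / N ≤ ‖x‖} := measure_mono hsub
        _ ≤ ENNReal.ofReal (C * (ε / N) ^ (-α)) := hμ _ _ hs
        _ = c * ENNReal.ofReal (N ^ α) := by
            rw [hc, ← ENNReal.ofReal_mul (by positivity)]
            congr 1
            rw [Real.div_rpow hεK.le hN0, Real.rpow_neg hεK.le, Real.rpow_neg hN0]
            have : (N : ℝ) ^ α ≠ 0 := by positivity
            field_simp
  have hcne : c ≠ ⊤ := ENNReal.ofReal_ne_top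
  have step : ∑' k : ℕ, ∫⁻ ω, μ (Z k ω) {x : Vec d | (Pi k ω).mulVec x ∈ K} ∂P ≤
      c * ∑' k : ℕ, ∫⁻ ω, ENNReal.ofReal (opNorm (Pi k ω) ^ α) ∂P := by
    rw [← ENNReal.tsum_mul_left]
    refine ENNReal.tsum_le_tsum fun k => ?_
    rw [← lintegral_const_mul' _ _ hcne]
    exact lintegral_mono fun ω => key k ω
  constructor
  · refine step.trans ?_
    rw [mul_assoc]
    exact le_mul_of_one_le_left zero_le hcard
  · exact ENNReal.mul_lt_top
      (ENNReal.mul_lt_top (by simp) ENNReal.ofReal_lt_top) hsum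
end
end

section
/- Let Y, Q be random vectors in ℝ^d and Π a random d×d matrix such that (i) Q is independent of the pair (Y, Π); (ii) for some α > 0 and regularly varying a of index 1/α, Y and Q are regularly varying with index α and normalizing function a; (iii) E‖Π‖^β < ∞ for some β > α. Then for every t > 0 and δ > 0: lim_{n→∞} n P( ‖Y‖ > t a_n and ( Y + ΠQ = 0 or ‖ Y/‖Y‖ − (Y+ΠQ)/‖Y+ΠQ‖ ‖ > δ ) ) = 0. -/
open MeasureTheory ProbabilityTheory Filter Topology ENNReal

noncomputable section

section Aux

open Set

instance {d : ℕ} : BorelSpace (Mat d) :=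
  ⟨(Pi.borelSpace (X := fun _ : Fin d => Fin d → ℝ)).measurable_eq⟩

/-- Uniform convergence theorem for additive slow variation (Karamata-type). -/
lemma uct_aux (h : ℝ → ℝ) (hm : Measurable h)
    (H : ∀ u : ℝ, Tendsto (fun x => h (x+u) - h x) atTop (nhds 0)) {ε : ℝ} (hε : 0 < ε) :
    ∀ᶠ x : ℝ in atTop, ∀ u ∈ Set.Icc (0:ℝ) 1, |h (x+u) - h x| ≤ ε := by
  by_contra hcon
  rw [Filter.not_eventually] at hcon
  have hseq : ∀ X : ℝ, ∃ x : ℝ, X ≤ x ∧ ∃ u ∈ Set.Icc (0:ℝ) 1, ε < |h (x+u) - h x| := by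
    intro X
    rcases (frequently_atTop.mp hcon X) with ⟨x, hx, hux⟩
    push_neg at hux
    rcases hux with ⟨u, hu, hgt⟩
    exact ⟨x, hx, u, hu, hgt⟩
  choose x hxge u hu hgt using fun n : ℕ => hseq n
  have hxtop : Tendsto x atTop atTop :=
    tendsto_atTop_mono hxge tendsto_natCast_atTop_atTop
  have hxutop : Tendsto (fun n => x n + u n) atTop atTop := by
    refine tendsto_atTop_mono (fun n => ?_) hxtop
    have := (hu n).1; linarith
  set E : ℕ → Set ℝ := fun n => Icc (0:ℝ) 2 ∩ ⋂ m, ⋂ (_ : n ≤ m),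
    {v : ℝ | |h (x m + v) - h (x m)| < ε/2} with hE
  set F : ℕ → Set ℝ := fun n => Icc (0:ℝ) 2 ∩ ⋂ m, ⋂ (_ : n ≤ m),
    {v : ℝ | |h (x m + u m + v) - h (x m + u m)| < ε/2} with hF
  have hEm : ∀ n, MeasurableSet (E n) := by
    intro n
    refine measurableSet_Icc.inter (MeasurableSet.iInter fun m => MeasurableSet.iInter fun _ => ?_)
    exact measurableSet_lt ((((hm.comp (measurable_const.add measurable_id)).sub
      measurable_const).abs)) measurable_const
  have hFm : ∀ n, MeasurableSet (F n) := by
    intro n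
    refine measurableSet_Icc.inter (MeasurableSet.iInter fun m => MeasurableSet.iInter fun _ => ?_)
    exact measurableSet_lt ((((hm.comp (measurable_const.add measurable_id)).sub
      measurable_const).abs)) measurable_const
  have hεhalf : 0 < ε/2 := by linarith
  have hEcover : Icc (0:ℝ) 2 ⊆ ⋃ n, E n := by
    intro v hv
    have : Tendsto (fun m => h (x m + v) - h (x m)) atTop (nhds 0) := (H v).comp hxtop
    rcases (Metric.tendsto_atTop.mp this (ε/2) hεhalf) with ⟨N, hN⟩
    refine mem_iUnion.mpr ⟨N, hv, ?_⟩
    simp only [mem_iInter, mem_setOf_eq]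
    intro m hm'
    simpa [Real.dist_eq] using hN m hm'
  have hFcover : Icc (0:ℝ) 2 ⊆ ⋃ n, F n := by
    intro v hv
    have : Tendsto (fun m => h (x m + u m + v) - h (x m + u m)) atTop (nhds 0) := (H v).comp hxutop
    rcases (Metric.tendsto_atTop.mp this (ε/2) hεhalf) with ⟨N, hN⟩
    refine mem_iUnion.mpr ⟨N, hv, ?_⟩
    simp only [mem_iInter, mem_setOf_eq]
    intro m hm'
    simpa [Real.dist_eq] using hN m hm'
  have hEmono : Monotone E := by
    intro i j hij v hv
    refine ⟨hv.1, ?_⟩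
    have h2 := hv.2
    simp only [mem_iInter, mem_setOf_eq] at h2 ⊢
    exact fun m hm' => h2 m (le_trans hij hm')
  have hFmono : Monotone F := by
    intro i j hij v hv
    refine ⟨hv.1, ?_⟩
    have h2 := hv.2
    simp only [mem_iInter, mem_setOf_eq] at h2 ⊢
    exact fun m hm' => h2 m (le_trans hij hm')
  have hEvol : Tendsto (volume ∘ E) atTop (nhds (volume (⋃ n, E n))) :=
    tendsto_measure_iUnion_atTop hEmono
  have hFvol : Tendsto (volume ∘ F) atTop (nhds (volume (⋃ n, F n))) :=
    tendsto_measure_iUnion_atTop hFmono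
  have hEU : volume (⋃ n, E n) = 2 := by
    refine le_antisymm ?_ ?_
    · refine le_trans (measure_mono (iUnion_subset fun n => inter_subset_left)) ?_
      rw [Real.volume_Icc]; norm_num
    · calc (2:ℝ≥0∞) = volume (Icc (0:ℝ) 2) := by rw [Real.volume_Icc]; norm_num
        _ ≤ _ := measure_mono hEcover
  have hFU : volume (⋃ n, F n) = 2 := by
    refine le_antisymm ?_ ?_
    · refine le_trans (measure_mono (iUnion_subset fun n => inter_subset_left)) ?_
      rw [Real.volume_Icc]; norm_num
    · calc (2:ℝ≥0∞) = volume (Icc (0:ℝ) 2) := by rw [Real.volume_Icc]; norm_num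
        _ ≤ _ := measure_mono hFcover
  rw [hEU] at hEvol
  rw [hFU] at hFvol
  have h74 : ENNReal.ofReal (7/4) < 2 := by
    rw [show (2:ℝ≥0∞) = ENNReal.ofReal 2 from (ENNReal.ofReal_ofNat 2).symm,
      ENNReal.ofReal_lt_ofReal_iff (by norm_num)]
    norm_num
  have hEev : ∀ᶠ n in atTop, ENNReal.ofReal (7/4) < volume (E n) :=
    hEvol.eventually (eventually_gt_nhds h74)
  have hFev : ∀ᶠ n in atTop, ENNReal.ofReal (7/4) < volume (F n) :=
    hFvol.eventually (eventually_gt_nhds h74)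
  rcases (hEev.and hFev).exists with ⟨n, hEn, hFn⟩
  set B : Set ℝ := (fun v => v - u n) ⁻¹' (F n) with hB
  have hBm : MeasurableSet B := hFm n |>.preimage (measurable_id.sub measurable_const)
  have hBvol : volume B = volume (F n) := by
    have : (fun v : ℝ => v - u n) = (fun v : ℝ => (-u n) + v) := by
      funext v; ring
    rw [hB, this]
    exact measure_preimage_add volume (-u n) (F n)
  have hEsub : E n ⊆ Icc (0:ℝ) 3 := fun v hv => ⟨hv.1.1, le_trans hv.1.2 (by norm_num)⟩
  have hBsub : B ⊆ Icc (0:ℝ) 3 := by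
    intro v hv
    have h1 : v - u n ∈ Icc (0:ℝ) 2 := hv.1
    have h2 := (hu n).1
    have h3 := (hu n).2
    constructor <;> [linarith [h1.1]; linarith [h1.2]]
  have hinter : (E n ∩ B).Nonempty := by
    apply nonempty_of_measure_ne_zero (μ := volume)
    intro hzero
    have hkey := measure_union_add_inter (μ := volume) (E n) hBm
    rw [hzero, add_zero] at hkey
    have hle : volume (E n ∪ B) ≤ 3 := by
      refine le_trans (measure_mono (union_subset hEsub hBsub)) ?_
      rw [Real.volume_Icc]; norm_num
    rw [hkey] at hle
    rw [hBvol] at hle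
    have hcon2 : ENNReal.ofReal (7/4) + ENNReal.ofReal (7/4) ≤ 3 :=
      le_trans (add_le_add hEn.le hFn.le) hle
    rw [← ENNReal.ofReal_add (by norm_num) (by norm_num),
      show (3:ℝ≥0∞) = ENNReal.ofReal 3 from (ENNReal.ofReal_ofNat 3).symm,
      ENNReal.ofReal_le_ofReal_iff (by norm_num)] at hcon2
    norm_num at hcon2
  rcases hinter with ⟨v, hvE, hvB⟩
  have hvE2 : |h (x n + v) - h (x n)| < ε/2 := by
    have := hvE.2
    simp only [mem_iInter, mem_setOf_eq] at this
    exact this n le_rfl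
  have hvF2 : |h (x n + u n + (v - u n)) - h (x n + u n)| < ε/2 := by
    have := hvB.2
    simp only [mem_iInter, mem_setOf_eq] at this
    exact this n le_rfl
  have hxv : x n + u n + (v - u n) = x n + v := by ring
  rw [hxv] at hvF2
  have : |h (x n + u n) - h (x n)| < ε := by
    have htri : |h (x n + u n) - h (x n)| ≤
        |h (x n + v) - h (x n + u n)| + |h (x n + v) - h (x n)| := by
      calc |h (x n + u n) - h (x n)|
          = |(h (x n + v) - h (x n)) - (h (x n + v) - h (x n + u n))| := by ring_nf
        _ ≤ |h (x n + v) - h (x n)| + |h (x n + v) - h (x n + u n)| := abs_sub _ _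
        _ = _ := by ring
    linarith [hgt n, abs_sub_comm (h (x n + v)) (h (x n + u n)), hvF2, hvE2]
  linarith [hgt n]

/-- A slowly varying function grows slower than any power. -/
lemma sv_growth (L : ℝ → ℝ) (hLm : Measurable L) (hpos : ∀ t > 0, 0 < L t)
    (hsv : ∀ lam > 0, Tendsto (fun t => L (lam * t) / L t) atTop (nhds 1))
    {σ : ℝ} (hσ : 0 < σ) : Tendsto (fun t : ℝ => t ^ σ * L t) atTop atTop := by
  set h : ℝ → ℝ := fun x => Real.log (L (Real.exp x)) with hh
  have hmh : Measurable h := Real.measurable_log.comp (hLm.comp Real.measurable_exp)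
  have H : ∀ u : ℝ, Tendsto (fun x => h (x+u) - h x) atTop (nhds 0) := by
    intro u
    have h1 : Tendsto (fun t => L (Real.exp u * t) / L t) atTop (nhds 1) :=
      hsv _ (Real.exp_pos u)
    have h2 : Tendsto (fun x : ℝ => L (Real.exp u * Real.exp x) / L (Real.exp x))
        atTop (nhds 1) := h1.comp Real.tendsto_exp_atTop
    have h3 : Tendsto (fun x : ℝ => Real.log (L (Real.exp u * Real.exp x) / L (Real.exp x)))
        atTop (nhds 0) := by
      have := (Real.continuousAt_log one_ne_zero).tendsto.comp h2
      simpa [Function.comp_def] using this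
    refine h3.congr fun x => ?_
    have e1 : (0:ℝ) < L (Real.exp u * Real.exp x) :=
      hpos _ (mul_pos (Real.exp_pos u) (Real.exp_pos x))
    have e2 : (0:ℝ) < L (Real.exp x) := hpos _ (Real.exp_pos x)
    rw [Real.log_div e1.ne' e2.ne', hh]
    simp only []
    rw [Real.exp_add, mul_comm (Real.exp x) (Real.exp u)]
  have hσ2 : 0 < σ/2 := by linarith
  rcases (eventually_atTop.mp (uct_aux h hmh H hσ2)) with ⟨X₀, hX₀⟩
  have chain : ∀ k : ℕ, ∀ u ∈ Icc (0:ℝ) 1, h X₀ - (σ/2) * (k+1) ≤ h (X₀ + u + k) := by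
    intro k
    induction k with
    | zero =>
      intro u hu
      have := hX₀ X₀ le_rfl u hu
      have := abs_le.mp this
      push_cast
      simp only [add_zero]
      linarith [this.1]
    | succ k ih =>
      intro u hu
      have hbase : X₀ ≤ X₀ + u + k := by
        have h0 := hu.1
        have h1 : (0:ℝ) ≤ (k:ℝ) := Nat.cast_nonneg k
        linarith
      have h1 := hX₀ (X₀ + u + k) hbase 1 ⟨zero_le_one, le_rfl⟩
      have h1' := (abs_le.mp h1).1
      have ih' := ih u hu
      have : (X₀ + u + k) + 1 = X₀ + u + (k+1 : ℕ) := by push_cast; ring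
      rw [this] at h1'
      push_cast at h1'
      push_cast at ih' ⊢
      linarith
  have hlow : ∀ y : ℝ, X₀ ≤ y → h X₀ - (σ/2) * (y - X₀ + 1) ≤ h y := by
    intro y hy
    set k : ℕ := ⌊y - X₀⌋₊ with hk
    have hy0 : 0 ≤ y - X₀ := by linarith
    have hkle : (k:ℝ) ≤ y - X₀ := Nat.floor_le hy0
    have hklt : y - X₀ < k + 1 := Nat.lt_floor_add_one _
    set u : ℝ := y - X₀ - k with hu'
    have hu : u ∈ Icc (0:ℝ) 1 := ⟨by simp [hu']; linarith, by simp [hu']; linarith⟩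
    have hcmain := chain k u hu
    have hyeq : X₀ + u + k = y := by simp [hu']; ring
    rw [hyeq] at hcmain
    have : h X₀ - (σ/2) * (y - X₀ + 1) ≤ h X₀ - (σ/2) * (k+1) := by
      have : (k:ℝ) + 1 ≤ y - X₀ + 1 := by linarith
      nlinarith
    linarith
  have hlin : Tendsto (fun y : ℝ => σ * y + h y) atTop atTop := by
    have hbound : ∀ᶠ y in atTop, (σ/2) * y + (h X₀ - (σ/2) * (1 - X₀)) ≤ σ * y + h y := by
      filter_upwards [eventually_ge_atTop X₀, eventually_ge_atTop (0:ℝ)] with y hy hy0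
      have := hlow y hy
      nlinarith
    have hl : Tendsto (fun y : ℝ => (σ/2) * y + (h X₀ - (σ/2) * (1 - X₀))) atTop atTop := by
      apply tendsto_atTop_add_const_right
      exact Tendsto.const_mul_atTop hσ2 tendsto_id
    exact tendsto_atTop_mono' _ hbound hl
  have hexp : Tendsto (fun t : ℝ => Real.exp (σ * Real.log t + h (Real.log t))) atTop atTop :=
    Real.tendsto_exp_atTop.comp (hlin.comp Real.tendsto_log_atTop)
  refine hexp.congr' ?_
  filter_upwards [eventually_gt_atTop (0:ℝ)] with t ht
  rw [Real.exp_add, hh]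
  simp only []
  rw [Real.exp_log ht, Real.exp_log (hpos t ht), Real.rpow_def_of_pos ht, mul_comm σ (Real.log t)]

/-- A quantitative form of: if the directions of `x` and `x + z` differ by more than `δ`,
then `z` is comparably large. -/
lemma geom_aux {d : ℕ} (x z : Vec d) (hx : 0 < ‖x‖) (hy : x + z ≠ 0) {δ : ℝ}
    (hlt : δ < ‖‖x‖⁻¹ • x - ‖x + z‖⁻¹ • (x + z)‖) : δ / 2 * ‖x‖ ≤ ‖z‖ := by
  set y := x + z with hyd
  have hys : 0 < ‖y‖ := norm_pos_iff.mpr hy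
  have t1 : ‖‖x‖⁻¹ • x - ‖y‖⁻¹ • y‖ ≤ ‖‖x‖⁻¹ • x - ‖x‖⁻¹ • y‖ + ‖‖x‖⁻¹ • y - ‖y‖⁻¹ • y‖ :=
    norm_sub_le_norm_sub_add_norm_sub (‖x‖⁻¹ • x) (‖x‖⁻¹ • y) (‖y‖⁻¹ • y)
  have t2 : ‖‖x‖⁻¹ • x - ‖x‖⁻¹ • y‖ = ‖x‖⁻¹ * ‖z‖ := by
    rw [← smul_sub, norm_smul, Real.norm_eq_abs, abs_of_pos (inv_pos.mpr hx)]
    congr 1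
    have : x - y = -z := by rw [hyd]; abel
    rw [this, norm_neg]
  have t3 : ‖‖x‖⁻¹ • y - ‖y‖⁻¹ • y‖ ≤ ‖x‖⁻¹ * ‖z‖ := by
    rw [← sub_smul, norm_smul, Real.norm_eq_abs]
    have e1 : ‖x‖⁻¹ - ‖y‖⁻¹ = (‖y‖ - ‖x‖) / (‖x‖ * ‖y‖) := by
      field_simp
    rw [e1, abs_div, abs_of_pos (mul_pos hx hys)]
    have e2 : |‖y‖ - ‖x‖| ≤ ‖z‖ := by
      have := abs_norm_sub_norm_le y x
      have e3 : y - x = z := by rw [hyd]; abel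
      rwa [e3] at this
    calc |‖y‖ - ‖x‖| / (‖x‖ * ‖y‖) * ‖y‖ = |‖y‖ - ‖x‖| / ‖x‖ := by
          field_simp
      _ ≤ ‖z‖ / ‖x‖ := by gcongr
      _ = ‖x‖⁻¹ * ‖z‖ := by rw [div_eq_inv_mul]
  have hδ2 : δ < ‖x‖⁻¹ * ‖z‖ + ‖x‖⁻¹ * ‖z‖ := lt_of_lt_of_le hlt (le_trans t1 (by rw [t2]; linarith))
  have : δ * ‖x‖ < 2 * ‖z‖ := by
    have h := (mul_lt_mul_of_pos_right hδ2 hx)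
    have heq : (‖x‖⁻¹ * ‖z‖ + ‖x‖⁻¹ * ‖z‖) * ‖x‖ = 2 * ‖z‖ := by field_simp; ring
    linarith [heq ▸ h]
  linarith

/-- The matrix operator norm bounds `mulVec`. -/
lemma opNorm_mulVec_le {d : ℕ} (M : Mat d) (v : Vec d) : ‖M.mulVec v‖ ≤ opNorm M * ‖v‖ := by
  have := (LinearMap.toContinuousLinearMap M.mulVecLin).le_opNorm v
  simpa [opNorm, Matrix.mulVecLin_apply] using this

/-- The operator norm is continuous on matrices. -/
lemma opNorm_continuous {d : ℕ} : Continuous (opNorm (d := d)) := by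
  let Φ : Mat d →ₗ[ℝ] (Vec d →L[ℝ] Vec d) :=
    { toFun := fun M => LinearMap.toContinuousLinearMap M.mulVecLin
      map_add' := by
        intro M N; ext v
        simp [Matrix.mulVecLin_apply, Matrix.add_mulVec]
      map_smul' := by
        intro c M; ext v
        simp [Matrix.mulVecLin_apply, Matrix.smul_mulVec] }
  have hΦ : Continuous Φ := Φ.continuous_of_finiteDimensional
  exact continuous_norm.comp hΦ

end Aux

/-- Under the hypotheses of Lemma 2.1, for every `t > 0` and `δ > 0`,
`n P(‖Y‖ > t aₙ, ‖dir Y − dir(Y+ΠQ)‖ > δ) → 0` (including the degenerate case `Y+ΠQ = 0`). -/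
theorem stmt11 {Ω : Type*} [MeasurableSpace Ω] (P : Measure Ω) [IsProbabilityMeasure P]
    {d : ℕ} (hd : 1 ≤ d)
    (Y Q : Ω → Vec d) (Pmat : Ω → Mat d)
    (hYm : Measurable Y) (hQm : Measurable Q) (hPm : Measurable Pmat)
    (hindep : IndepFun Q (fun ω => (Y ω, Pmat ω)) P)
    (α : ℝ) (a : ℝ → ℝ) (ν μ : Measure (Vec d))
    (hY : IsRegVar P Y α a ν) (hQ : IsRegVar P Q α a μ)
    (β : ℝ) (hβ : α < β)
    (hmom : ∫⁻ ω, ENNReal.ofReal (opNorm (Pmat ω) ^ β) ∂P < ⊤)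
    (t δ : ℝ) (ht : 0 < t) (hδ : 0 < δ) :
    Filter.Tendsto (fun n : ℕ => (n : ℝ) *
        (P {ω | t * a n < ‖Y ω‖ ∧
          (Y ω + (Pmat ω).mulVec (Q ω) = 0 ∨
            δ < ‖‖Y ω‖⁻¹ • Y ω -
              ‖Y ω + (Pmat ω).mulVec (Q ω)‖⁻¹ • (Y ω + (Pmat ω).mulVec (Q ω))‖)}).toReal)
      Filter.atTop (nhds 0) := by
  obtain ⟨hα, ⟨L, hLm, hLpos, hLsv, haL⟩, hνfin, hνconv⟩ := hY
  have hβ0 : 0 < β := lt_trans hα hβ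
  have hapos : ∀ s : ℝ, 0 < s → 0 < a s := by
    intro s hs
    rw [haL s hs]
    exact mul_pos (Real.rpow_pos_of_pos hs _) (hLpos s hs)
  set β' : ℝ := (α + β) / 2 with hβ'def
  have hβ'0 : 0 < β' := by rw [hβ'def]; linarith
  have hαβ' : α < β' := by rw [hβ'def]; linarith
  have hβ'β : β' < β := by rw [hβ'def]; linarith
  set σ : ℝ := 1/α - 1/β' with hσdef
  have hσ : 0 < σ := by
    rw [hσdef]
    have : 1/β' < 1/α := by
      apply one_div_lt_one_div_of_lt hα hαβ'
    linarith
  -- growth of `a n` compared to `n ^ (1/β')`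
  have hgrow : Tendsto (fun n : ℕ => a n / (n:ℝ) ^ (1/β' : ℝ)) atTop atTop := by
    have h1 := sv_growth L hLm hLpos hLsv hσ
    have h2 : Tendsto (fun n : ℕ => ((n:ℝ)) ^ σ * L n) atTop atTop :=
      h1.comp tendsto_natCast_atTop_atTop
    refine h2.congr' ?_
    filter_upwards [eventually_ge_atTop 1] with n hn
    have hn0 : (0:ℝ) < n := by exact_mod_cast Nat.lt_of_lt_of_le Nat.zero_lt_one hn
    rw [haL n hn0, hσdef, Real.rpow_sub hn0]
    field_simp
  set eps0 : ℝ := min 1 (δ/2) with heps0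
  have heps0pos : 0 < eps0 := lt_min one_pos (by linarith)
  set eps : ℝ := eps0 * t with hepsdef
  have hepspos : 0 < eps := mul_pos heps0pos ht
  set rn : ℕ → ℝ := fun n => (n:ℝ) ^ (1/β' : ℝ) with hrn
  have hrnpos : ∀ n : ℕ, 1 ≤ n → 0 < rn n := by
    intro n hn
    have hn0 : (0:ℝ) < n := by exact_mod_cast Nat.lt_of_lt_of_le Nat.zero_lt_one hn
    exact Real.rpow_pos_of_pos hn0 _
  set cQ : ℕ → ℝ := fun n => eps * (a n / rn n) with hcQ
  have hcQtop : Tendsto cQ atTop atTop := Tendsto.const_mul_atTop hepspos hgrow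
  -- tail of Q vanishes at high levels
  have hQ0 : Tendsto (fun m : ℕ => (P {ω | (m:ℝ) ≤ ‖Q ω‖}).toReal) atTop (nhds 0) := by
    have hiter : Tendsto (fun m : ℕ => P {ω | (m:ℝ) ≤ ‖Q ω‖}) atTop
        (nhds (P (⋂ m : ℕ, {ω | (m:ℝ) ≤ ‖Q ω‖}))) := by
      refine tendsto_measure_iInter_atTop (s := fun m : ℕ => {ω | (m:ℝ) ≤ ‖Q ω‖})
        (fun m => (measurableSet_le measurable_const hQm.norm).nullMeasurableSet)
        (fun i j hij ω hω => show (i:ℝ) ≤ ‖Q ω‖ from le_trans (Nat.cast_le.mpr hij) hω) ⟨0, measure_ne_top P _⟩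
    have hempty : (⋂ m : ℕ, {ω | (m:ℝ) ≤ ‖Q ω‖}) = (∅ : Set Ω) := by
      ext ω
      simp only [Set.mem_iInter, Set.mem_setOf_eq, Set.mem_empty_iff_false, iff_false, not_forall,
        not_le]
      exact exists_nat_gt ‖Q ω‖
    rw [hempty, measure_empty] at hiter
    have := (ENNReal.tendsto_toReal (a := 0) (by simp)).comp hiter
    simpa [Function.comp_def] using this
  have hQsmall : Tendsto (fun n : ℕ => (P {ω | cQ n ≤ ‖Q ω‖}).toReal) atTop (nhds 0) := by
    apply squeeze_zero'
      (g := fun n : ℕ => (P {ω | (⌊cQ n⌋₊ : ℝ) ≤ ‖Q ω‖}).toReal)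
      (Filter.Eventually.of_forall fun n => ENNReal.toReal_nonneg)
    · filter_upwards [hcQtop.eventually_ge_atTop 0] with n hn
      apply ENNReal.toReal_mono (measure_ne_top P _)
      apply measure_mono
      intro ω hω
      exact le_trans (Nat.floor_le hn) hω
    · exact hQ0.comp (tendsto_nat_floor_atTop.comp hcQtop)
  -- ν-continuity radius below t
  have hrad : ∃ r : ℝ, t/2 < r ∧ r < t ∧ ν {x : Vec d | ‖x‖ = r} = 0 := by
    by_contra hcon
    push_neg at hcon
    set As : (Set.Ioo (t/2) t) → Set (Vec d) := fun r => {x | ‖x‖ = (r:ℝ)} with hAs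
    have hAm : ∀ r, MeasurableSet (As r) := fun r =>
      ((isClosed_singleton (x := (r:ℝ))).preimage continuous_norm).measurableSet
    have hdisj : Pairwise (Function.onFun Disjoint As) := by
      intro i j hij
      simp only [Function.onFun, Set.disjoint_left, hAs]
      intro x hxi hxj
      exact hij (Subtype.coe_injective (by
        simp only [Set.mem_setOf_eq] at hxi hxj
        exact hxi.symm.trans hxj))
    have hBclosed : IsClosed {x : Vec d | t/2 ≤ ‖x‖} := isClosed_le continuous_const continuous_norm
    have hfin2 : ν (⋃ r, As r) ≠ ⊤ := by
      refine (lt_of_le_of_lt (measure_mono ?_) (hνfin {x : Vec d | t/2 ≤ ‖x‖}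
        hBclosed.measurableSet ?_)).ne
      · intro x hx
        rcases Set.mem_iUnion.mp hx with ⟨r, hr⟩
        simp only [Set.mem_setOf_eq, hAs] at hr ⊢
        exact le_of_lt (lt_of_lt_of_le r.2.1 (le_of_eq hr.symm))
      · rw [hBclosed.closure_eq]
        simp only [Set.mem_setOf_eq, norm_zero]
        linarith
    have hcnt := MeasureTheory.Measure.countable_meas_pos_of_disjoint_of_meas_iUnion_ne_top
      ν hAm hdisj hfin2
    have hsub : (Set.univ : Set (Set.Ioo (t/2) t)) ⊆ {i | 0 < ν (As i)} := by
      intro i _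
      exact pos_iff_ne_zero.mpr (hcon i i.2.1 i.2.2)
    have hunivc : (Set.univ : Set (Set.Ioo (t/2) t)).Countable := hcnt.mono hsub
    have hIooC : (Set.Ioo (t/2) t).Countable := by
      rw [← Set.countable_coe_iff]
      exact Set.countable_univ_iff.mp hunivc
    have hle := hIooC.le_aleph0
    rw [Cardinal.mk_Ioo_real (by linarith)] at hle
    exact absurd hle (not_le.mpr Cardinal.aleph0_lt_continuum)
  obtain ⟨r, hr1, hr2, hr0⟩ := hrad
  have hrpos : 0 < r := lt_trans (by linarith) hr1
  set A : Set (Vec d) := {x | r < ‖x‖} with hA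
  have hAo : IsOpen A := isOpen_lt continuous_const continuous_norm
  have hclosA : closure A ⊆ {x : Vec d | r ≤ ‖x‖} := by
    apply closure_minimal
    · intro x hx
      exact le_of_lt (show r < ‖x‖ from hx)
    · exact isClosed_le continuous_const continuous_norm
  have h0A : 0 ∉ closure A := by
    intro h0
    have := hclosA h0
    simp only [Set.mem_setOf_eq, norm_zero] at this
    linarith
  have hfrA : ν (frontier A) = 0 := by
    refine measure_mono_null ?_ hr0
    rw [hAo.frontier_eq]
    intro x hx
    have h1 := hclosA hx.1
    have h2 : ¬ (r < ‖x‖) := hx.2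
    simp only [Set.mem_setOf_eq] at h1 h2 ⊢
    linarith
  have hconvY := hνconv A hAo.measurableSet h0A hfrA
  obtain ⟨C, hC⟩ := hconvY.bddAbove_range
  have hCb : ∀ n : ℕ, (n:ℝ) * (P {ω | (a n)⁻¹ • Y ω ∈ A}).toReal ≤ C := fun n =>
    hC (Set.mem_range_self n)
  have hYb : ∀ n : ℕ, 1 ≤ n → (n:ℝ) * (P {ω | t * a n < ‖Y ω‖}).toReal ≤ C := by
    intro n hn
    have hn0 : (0:ℝ) < n := by exact_mod_cast Nat.lt_of_lt_of_le Nat.zero_lt_one hn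
    have han : 0 < a n := hapos n hn0
    have hsub : {ω | t * a n < ‖Y ω‖} ⊆ {ω | (a n)⁻¹ • Y ω ∈ A} := by
      intro ω hω
      show r < ‖(a n)⁻¹ • Y ω‖
      rw [norm_smul, Real.norm_eq_abs, abs_of_pos (inv_pos.mpr han), inv_mul_eq_div,
        lt_div_iff₀ han]
      calc r * a n < t * a n := mul_lt_mul_of_pos_right hr2 han
        _ < ‖Y ω‖ := hω
    refine le_trans ?_ (hCb n)
    exact mul_le_mul_of_nonneg_left
      (ENNReal.toReal_mono (measure_ne_top P _) (measure_mono hsub)) (Nat.cast_nonneg n)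
  -- measurability of opNorm ∘ Pmat
  have hopm : Measurable fun ω => opNorm (Pmat ω) := (opNorm_continuous.measurable).comp hPm
  set I : ℝ≥0∞ := ∫⁻ ω, ENNReal.ofReal (opNorm (Pmat ω) ^ β) ∂P with hI
  have hIm : AEMeasurable (fun ω => ENNReal.ofReal (opNorm (Pmat ω) ^ β)) P := by
    apply Measurable.aemeasurable
    apply ENNReal.measurable_ofReal.comp
    exact (Real.continuous_rpow_const hβ0.le).measurable.comp hopm
  -- Markov bound for term 1
  have hMarkov : ∀ n : ℕ, 1 ≤ n →
      (P {ω | rn n < opNorm (Pmat ω)}).toReal ≤ I.toReal / (rn n) ^ β := by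
    intro n hn
    have hrnp := hrnpos n hn
    have hrnb : (0:ℝ) < (rn n) ^ β := Real.rpow_pos_of_pos hrnp _
    have h1 : P {ω | rn n < opNorm (Pmat ω)} ≤ I / ENNReal.ofReal ((rn n) ^ β) := by
      refine le_trans (measure_mono ?_) (meas_ge_le_lintegral_div hIm
        (by simp [ENNReal.ofReal_eq_zero, not_le, hrnb]) ENNReal.ofReal_ne_top)
      intro ω hω
      simp only [Set.mem_setOf_eq] at hω ⊢
      exact ENNReal.ofReal_le_ofReal (Real.rpow_le_rpow hrnp.le hω.le hβ0.le)
    have h2 : I / ENNReal.ofReal ((rn n) ^ β) ≠ ⊤ :=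
      (ENNReal.div_lt_top hmom.ne (by simp [ENNReal.ofReal_eq_zero, not_le, hrnb])).ne
    calc (P {ω | rn n < opNorm (Pmat ω)}).toReal
        ≤ (I / ENNReal.ofReal ((rn n) ^ β)).toReal := ENNReal.toReal_mono h2 h1
      _ = I.toReal / (rn n) ^ β := by
          rw [ENNReal.toReal_div, ENNReal.toReal_ofReal hrnb.le]
  -- term-1 tendsto 0
  have hT1 : Tendsto (fun n : ℕ => (n:ℝ) * (I.toReal / (rn n) ^ β)) atTop (nhds 0) := by
    have hexp : 0 < β / β' - 1 := by
      rw [lt_sub_iff_add_lt, zero_add, lt_div_iff₀ hβ'0, one_mul]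
      exact hβ'β
    have h1 : Tendsto (fun s : ℝ => s ^ (-(β/β' - 1))) atTop (nhds 0) :=
      tendsto_rpow_neg_atTop hexp
    have h2 : Tendsto (fun n : ℕ => I.toReal * ((n:ℝ) ^ (-(β/β' - 1)))) atTop (nhds 0) := by
      have := (h1.comp (tendsto_natCast_atTop_atTop (R := ℝ))).const_mul I.toReal
      simpa using this
    refine h2.congr' ?_
    filter_upwards [eventually_ge_atTop 1] with n hn
    have hn0 : (0:ℝ) < n := by exact_mod_cast Nat.lt_of_lt_of_le Nat.zero_lt_one hn
    have e1 : ((n:ℝ) ^ (1/β' : ℝ)) ^ β = (n:ℝ) ^ (β/β' : ℝ) := by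
      rw [← Real.rpow_mul hn0.le]
      congr 1
      field_simp
    rw [hrn]
    simp only []
    rw [e1, Real.rpow_neg hn0.le, Real.rpow_sub hn0, Real.rpow_one]
    field_simp
  -- main squeeze
  apply squeeze_zero'
    (g := fun n : ℕ => (n:ℝ) * (I.toReal / (rn n) ^ β) + C * (P {ω | cQ n ≤ ‖Q ω‖}).toReal)
    (Filter.Eventually.of_forall fun n => mul_nonneg (Nat.cast_nonneg n) ENNReal.toReal_nonneg)
  · filter_upwards [eventually_ge_atTop 1] with n hn
    have hn0 : (0:ℝ) < n := by exact_mod_cast Nat.lt_of_lt_of_le Nat.zero_lt_one hn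
    have han : 0 < a n := hapos n hn0
    have hrnp := hrnpos n hn
    set S1 : Set Ω := {ω | rn n < opNorm (Pmat ω)} with hS1
    set S2 : Set Ω := Q ⁻¹' {v : Vec d | cQ n ≤ ‖v‖} ∩
      (fun ω => (Y ω, Pmat ω)) ⁻¹' ({y : Vec d | t * a n < ‖y‖} ×ˢ (Set.univ : Set (Mat d)))
      with hS2
    -- inclusion
    have hincl : {ω | t * a n < ‖Y ω‖ ∧
        (Y ω + (Pmat ω).mulVec (Q ω) = 0 ∨
          δ < ‖‖Y ω‖⁻¹ • Y ω -
            ‖Y ω + (Pmat ω).mulVec (Q ω)‖⁻¹ • (Y ω + (Pmat ω).mulVec (Q ω))‖)} ⊆ S1 ∪ S2 := by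
      intro ω hω
      obtain ⟨htY, hor⟩ := hω
      set z : Vec d := (Pmat ω).mulVec (Q ω) with hz
      have hta : 0 < t * a n := mul_pos ht han
      have hYpos : 0 < ‖Y ω‖ := lt_trans hta htY
      have hzbig : eps0 * ‖Y ω‖ ≤ ‖z‖ := by
        by_cases hy0 : Y ω + z = 0
        · have hzeq : z = -Y ω := by
            have := hy0
            linear_combination (norm := module) this
          rw [hzeq, norm_neg]
          calc eps0 * ‖Y ω‖ ≤ 1 * ‖Y ω‖ :=
              mul_le_mul_of_nonneg_right (min_le_left _ _) (norm_nonneg _)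
            _ = ‖Y ω‖ := one_mul _
        · have hd2 := hor.resolve_left hy0
          have := geom_aux (Y ω) z hYpos hy0 hd2
          calc eps0 * ‖Y ω‖ ≤ δ/2 * ‖Y ω‖ :=
              mul_le_mul_of_nonneg_right (min_le_right _ _) (norm_nonneg _)
            _ ≤ ‖z‖ := this
      have hchain : eps * a n < opNorm (Pmat ω) * ‖Q ω‖ := by
        have h1 : eps * a n = eps0 * (t * a n) := by rw [hepsdef]; ring
        have h2 : eps0 * (t * a n) < eps0 * ‖Y ω‖ := by
          exact mul_lt_mul_of_pos_left htY heps0pos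
        have h3 := opNorm_mulVec_le (Pmat ω) (Q ω)
        rw [h1]
        exact lt_of_lt_of_le (lt_of_lt_of_le h2 hzbig) h3
      by_cases hop : rn n < opNorm (Pmat ω)
      · exact Or.inl hop
      · right
        push_neg at hop
        have hQn : 0 ≤ ‖Q ω‖ := norm_nonneg _
        have h4 : eps * a n < rn n * ‖Q ω‖ :=
          lt_of_lt_of_le hchain (mul_le_mul_of_nonneg_right hop hQn)
        have h5 : cQ n ≤ ‖Q ω‖ := by
          rw [hcQ]
          simp only []
          rw [mul_div_assoc', div_le_iff₀ hrnp]
          nlinarith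
        constructor
        · exact h5
        · simp only [Set.mem_preimage, Set.mem_prod, Set.mem_setOf_eq, Set.mem_univ, and_true]
          exact htY
    -- independence factorization for S2
    have hfact : P S2 = P (Q ⁻¹' {v : Vec d | cQ n ≤ ‖v‖}) *
        P ((fun ω => (Y ω, Pmat ω)) ⁻¹' ({y : Vec d | t * a n < ‖y‖} ×ˢ Set.univ)) := by
      apply hindep.measure_inter_preimage_eq_mul
      · exact measurableSet_le measurable_const measurable_norm
      · exact ((isOpen_lt continuous_const continuous_norm).measurableSet).prod
          MeasurableSet.univ
    have hpairY : (fun ω => (Y ω, Pmat ω)) ⁻¹' ({y : Vec d | t * a n < ‖y‖} ×ˢ Set.univ) =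
        {ω | t * a n < ‖Y ω‖} := by
      ext ω
      simp [Set.mem_prod]
    -- bound
    have hfin1 : P S1 ≠ ⊤ := measure_ne_top P _
    have hfin2 : P S2 ≠ ⊤ := measure_ne_top P _
    calc (n:ℝ) * (P {ω | t * a n < ‖Y ω‖ ∧
          (Y ω + (Pmat ω).mulVec (Q ω) = 0 ∨
            δ < ‖‖Y ω‖⁻¹ • Y ω -
              ‖Y ω + (Pmat ω).mulVec (Q ω)‖⁻¹ • (Y ω + (Pmat ω).mulVec (Q ω))‖)}).toReal
        ≤ (n:ℝ) * (P S1 + P S2).toReal := by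
          apply mul_le_mul_of_nonneg_left ?_ (Nat.cast_nonneg n)
          apply ENNReal.toReal_mono (by simp [ENNReal.add_ne_top, hfin1, hfin2])
          exact le_trans (measure_mono hincl) (measure_union_le S1 S2)
      _ = (n:ℝ) * (P S1).toReal + (n:ℝ) * (P S2).toReal := by
          rw [ENNReal.toReal_add hfin1 hfin2]; ring
      _ ≤ (n:ℝ) * (I.toReal / (rn n) ^ β) + C * (P {ω | cQ n ≤ ‖Q ω‖}).toReal := by
          apply add_le_add
          · exact mul_le_mul_of_nonneg_left (hMarkov n hn) (Nat.cast_nonneg n)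
          · rw [hfact, hpairY, ENNReal.toReal_mul]
            have : (n:ℝ) * ((P (Q ⁻¹' {v : Vec d | cQ n ≤ ‖v‖})).toReal *
                (P {ω | t * a n < ‖Y ω‖}).toReal) =
                ((n:ℝ) * (P {ω | t * a n < ‖Y ω‖}).toReal) *
                (P (Q ⁻¹' {v : Vec d | cQ n ≤ ‖v‖})).toReal := by ring
            rw [this]
            have hQeq : Q ⁻¹' {v : Vec d | cQ n ≤ ‖v‖} = {ω | cQ n ≤ ‖Q ω‖} := rfl
            rw [hQeq]
            exact mul_le_mul_of_nonneg_right (hYb n hn) ENNReal.toReal_nonneg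
  · have := hT1.add (hQsmall.const_mul C)
    simpa using this

end
end
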